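/- Let C be an additive right polycyclic code induced by a binary vector a. Then there exist binary polynomials g_1, g_2, b of degree less than n such that (g_1, g_2, b) is a standard generating triple for C and C equals the F2[x]-submodule of R_n generated by the two elements α g_1 + g_2 and b; in particular every element of C can be written as q_1·(α g_1 + g_2) + q_2·b in R_n with q_1, q_2 binary polynomials. -/

import Mathlib

open Polynomial

noncomputable section

abbrev F4 : Type := GaloisField 2 2

def IsBin (z : F4) : Prop := z = 0 ∨ z = 1

def IsBinVec {n : ℕ} (a : Fin n → F4) : Prop := ∀ i, IsBin (a i)

def IsBinPoly (p : Polynomial F4) : Prop := ∀ i, IsBin (p.coeff i)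

def polyOfVec {n : ℕ} (c : Fin n → F4) : Polynomial F4 :=
  ∑ i : Fin n, Polynomial.C (c i) * X ^ (i : ℕ)

def rightShift {n : ℕ} (a c : Fin n → F4) : Fin n → F4 := fun i =>
  (if (i : ℕ) = 0 then 0 else c ⟨(i : ℕ) - 1, lt_of_le_of_lt (Nat.sub_le _ _) i.isLt⟩)
    + c ⟨n - 1, Nat.sub_lt i.pos Nat.one_pos⟩ * a i

def leftShift {n : ℕ} (a c : Fin n → F4) : Fin n → F4 := fun i =>
  (if h : (i : ℕ) + 1 < n then c ⟨(i : ℕ) + 1, h⟩ else 0) + c ⟨0, i.pos⟩ * a i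

def seqShift {n : ℕ} (a c : Fin n → F4) : Fin n → F4 := fun i =>
  if h : (i : ℕ) + 1 < n then c ⟨(i : ℕ) + 1, h⟩ else ∑ j, a j * c j

def IsRightPolycyclic {n : ℕ} (a : Fin n → F4) (C : AddSubgroup (Fin n → F4)) : Prop :=
  ∀ c ∈ C, rightShift a c ∈ C

def IsLeftPolycyclic {n : ℕ} (a : Fin n → F4) (C : AddSubgroup (Fin n → F4)) : Prop :=
  ∀ c ∈ C, leftShift a c ∈ C

def quotMk {n : ℕ} (a : Fin n → F4) :
    Polynomial F4 →+* Polynomial F4 ⧸ Ideal.span {X ^ n - polyOfVec a} :=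
  Ideal.Quotient.mk _

def codeImage {n : ℕ} (a : Fin n → F4) (C : AddSubgroup (Fin n → F4)) :
    Set (Polynomial F4 ⧸ Ideal.span {X ^ n - polyOfVec a}) :=
  (fun c => quotMk a (polyOfVec c)) '' (C : Set (Fin n → F4))

/-- `(g1, g2, b)` is a standard generating triple for the additive code `C`,
viewed inside `R_n = F4[x]/(x^n - a(x))`:  `b` is a binary polynomial of degree
less than `n` in `C` of minimal degree among nonzero binary polynomials in `C`
(`b = 0` if `C` contains no nonzero binary polynomial), `α g1 + g2` is a
nonbinary element of `C` with `g1, g2` binary of degree less than `n` and `g1`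
of minimal degree among binary parts of nonbinary elements of `C`
(`α g1 + g2 = 0` if every element of `C` is binary), and `deg g2 < deg b`
whenever `b ≠ 0` and `g2 ≠ 0`. -/
def StdTriple {n : ℕ} (a : Fin n → F4) (C : AddSubgroup (Fin n → F4)) (α : F4)
    (g1 g2 b : Polynomial F4) : Prop :=
  IsBinPoly g1 ∧ IsBinPoly g2 ∧ IsBinPoly b ∧
  g1.degree < (n : WithBot ℕ) ∧ g2.degree < (n : WithBot ℕ) ∧ b.degree < (n : WithBot ℕ) ∧
  ((b = 0 ∧ ∀ p : Polynomial F4, IsBinPoly p → p.degree < (n : WithBot ℕ) →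
      quotMk a p ∈ codeImage a C → p = 0) ∨
   (b ≠ 0 ∧ quotMk a b ∈ codeImage a C ∧
      ∀ p : Polynomial F4, IsBinPoly p → p ≠ 0 → p.degree < (n : WithBot ℕ) →
        quotMk a p ∈ codeImage a C → b.degree ≤ p.degree)) ∧
  ((g1 = 0 ∧ g2 = 0 ∧ ∀ h1 h2 : Polynomial F4, IsBinPoly h1 → IsBinPoly h2 →
      h1.degree < (n : WithBot ℕ) → h2.degree < (n : WithBot ℕ) →
      quotMk a (Polynomial.C α * h1 + h2) ∈ codeImage a C → h1 = 0) ∨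
   (g1 ≠ 0 ∧ quotMk a (Polynomial.C α * g1 + g2) ∈ codeImage a C ∧
      ∀ h1 h2 : Polynomial F4, IsBinPoly h1 → IsBinPoly h2 → h1 ≠ 0 →
        h1.degree < (n : WithBot ℕ) → h2.degree < (n : WithBot ℕ) →
        quotMk a (Polynomial.C α * h1 + h2) ∈ codeImage a C → g1.degree ≤ h1.degree)) ∧
  (b ≠ 0 → g2 ≠ 0 → g2.degree < b.degree)

/-- `C` equals the `F2[x]`-submodule of `R_n` generated by `α g1 + g2` and `b`:
every element of `C` is of the form `q1 (α g1 + g2) + q2 b` with `q1, q2`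
binary polynomials, and conversely every such combination lies in `C`. -/
def GeneratesCode {n : ℕ} (a : Fin n → F4) (C : AddSubgroup (Fin n → F4)) (α : F4)
    (g1 g2 b : Polynomial F4) : Prop :=
  (∀ c ∈ C, ∃ q1 q2 : Polynomial F4, IsBinPoly q1 ∧ IsBinPoly q2 ∧
      quotMk a (polyOfVec c) = quotMk a (q1 * (Polynomial.C α * g1 + g2) + q2 * b)) ∧
  (∀ q1 q2 : Polynomial F4, IsBinPoly q1 → IsBinPoly q2 →
      quotMk a (q1 * (Polynomial.C α * g1 + g2) + q2 * b) ∈ codeImage a C)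

namespace Stmt5Aux

def phi : ZMod 2 →+* F4 := algebraMap (ZMod 2) F4

lemma zmod2_cases : ∀ t : ZMod 2, t = 0 ∨ t = 1 := by decide

lemma isBin_iff {z : F4} : IsBin z ↔ ∃ t : ZMod 2, phi t = z := by
  constructor
  · rintro (rfl | rfl)
    · exact ⟨0, map_zero _⟩
    · exact ⟨1, map_one _⟩
  · rintro ⟨t, rfl⟩
    rcases zmod2_cases t with rfl | rfl
    · exact Or.inl (map_zero _)
    · exact Or.inr (map_one _)

lemma isBinPoly_map (P : Polynomial (ZMod 2)) : IsBinPoly (P.map phi) := by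
  intro j
  rw [coeff_map]
  exact isBin_iff.mpr ⟨_, rfl⟩

lemma isBinPoly_iff {p : Polynomial F4} : IsBinPoly p ↔ ∃ P : Polynomial (ZMod 2), P.map phi = p := by
  constructor
  · intro hp
    classical
    refine ⟨∑ i ∈ p.support, monomial i (if p.coeff i = 1 then (1 : ZMod 2) else 0), ?_⟩
    ext j
    rw [coeff_map, finset_sum_coeff]
    simp only [coeff_monomial]
    rw [Finset.sum_ite_eq' p.support j (fun i => if p.coeff i = 1 then (1 : ZMod 2) else 0)]
    by_cases hj : j ∈ p.support
    · rw [if_pos hj]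
      rcases hp j with h0 | h1
      · exact absurd h0 (mem_support_iff.mp hj)
      · rw [if_pos h1, map_one, h1]
    · rw [if_neg hj, map_zero, (notMem_support_iff.mp hj)]
  · rintro ⟨P, rfl⟩
    exact isBinPoly_map P

lemma binPoly_zero : IsBinPoly (0 : Polynomial F4) := fun _ => Or.inl (by simp)

lemma binPoly_sub {p q : Polynomial F4} (hp : IsBinPoly p) (hq : IsBinPoly q) :
    IsBinPoly (p - q) := by
  obtain ⟨P, rfl⟩ := isBinPoly_iff.mp hp
  obtain ⟨Q, rfl⟩ := isBinPoly_iff.mp hq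
  exact isBinPoly_iff.mpr ⟨P - Q, by simp [Polynomial.map_sub]⟩

lemma binPoly_mul {p q : Polynomial F4} (hp : IsBinPoly p) (hq : IsBinPoly q) :
    IsBinPoly (p * q) := by
  obtain ⟨P, rfl⟩ := isBinPoly_iff.mp hp
  obtain ⟨Q, rfl⟩ := isBinPoly_iff.mp hq
  exact isBinPoly_iff.mpr ⟨P * Q, by simp [Polynomial.map_mul]⟩

lemma monic_of_bin {b : Polynomial F4} (hb : IsBinPoly b) (hb0 : b ≠ 0) : b.Monic := by
  rcases hb b.natDegree with h | h
  · exact absurd h (leadingCoeff_ne_zero.mpr hb0)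
  · exact h

/-- binary division -/
lemma bin_div {p b : Polynomial F4} (hp : IsBinPoly p) (hb : IsBinPoly b) (hbm : b.Monic) :
    ∃ q r : Polynomial F4, IsBinPoly q ∧ IsBinPoly r ∧ p = q * b + r ∧ r.degree < b.degree := by
  obtain ⟨P, rfl⟩ := isBinPoly_iff.mp hp
  obtain ⟨B, rfl⟩ := isBinPoly_iff.mp hb
  have hBm : B.Monic := (monic_map_iff (f := phi)).mp hbm
  refine ⟨(P /ₘ B).map phi, (P %ₘ B).map phi, isBinPoly_map _, isBinPoly_map _, ?_, ?_⟩
  · have := modByMonic_add_div P B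
    calc P.map phi = (P %ₘ B + B * (P /ₘ B)).map phi := by rw [this]
    _ = (P /ₘ B).map phi * B.map phi + (P %ₘ B).map phi := by
        rw [Polynomial.map_add, Polynomial.map_mul]; ring
  · rw [degree_map_eq_of_injective phi.injective, degree_map_eq_of_injective phi.injective]
    exact degree_modByMonic_lt P hBm

lemma polyOfVec_coeff {n : ℕ} (c : Fin n → F4) (j : ℕ) :
    (polyOfVec c).coeff j = if h : j < n then c ⟨j, h⟩ else 0 := by
  unfold polyOfVec
  rw [finset_sum_coeff]
  simp only [coeff_C_mul, coeff_X_pow, mul_ite, mul_one, mul_zero]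
  by_cases h : j < n
  · rw [dif_pos h, Finset.sum_eq_single (⟨j, h⟩ : Fin n)]
    · simp
    · intro i _ hne
      rw [if_neg]
      intro hji
      exact hne (by ext; simp [hji.symm])
    · intro habs
      exact absurd (Finset.mem_univ _) habs
  · rw [dif_neg h]
    apply Finset.sum_eq_zero
    intro i _
    rw [if_neg]
    intro hji
    exact h (hji ▸ i.isLt)

lemma degree_polyOfVec_lt {n : ℕ} (c : Fin n → F4) : (polyOfVec c).degree < (n : WithBot ℕ) := by
  rw [degree_lt_iff_coeff_zero]
  intro m hm
  rw [polyOfVec_coeff, dif_neg (by omega)]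

lemma isBinPoly_polyOfVec {n : ℕ} {c : Fin n → F4} (hc : ∀ i, IsBin (c i)) :
    IsBinPoly (polyOfVec c) := by
  intro j
  rw [polyOfVec_coeff]
  split
  · exact hc _
  · exact Or.inl rfl

lemma polyOfVec_add {n : ℕ} (c d : Fin n → F4) :
    polyOfVec (c + d) = polyOfVec c + polyOfVec d := by
  unfold polyOfVec
  rw [← Finset.sum_add_distrib]
  apply Finset.sum_congr rfl
  intro i _
  simp [add_mul]

lemma polyOfVec_zero {n : ℕ} : polyOfVec (0 : Fin n → F4) = 0 := by
  unfold polyOfVec; simp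

lemma polyOfVec_neg {n : ℕ} (c : Fin n → F4) : polyOfVec (-c) = -polyOfVec c := by
  unfold polyOfVec
  rw [← Finset.sum_neg_distrib]
  apply Finset.sum_congr rfl
  intro i _
  simp

lemma polyOfVec_smul {n : ℕ} (z : F4) (c : Fin n → F4) :
    polyOfVec (fun i => z * c i) = C z * polyOfVec c := by
  unfold polyOfVec
  rw [Finset.mul_sum]
  apply Finset.sum_congr rfl
  intro i _
  rw [map_mul, mul_assoc]

/-- F4 elements decompose over the binary subfield with basis {α, 1}. -/
lemma f4_decomp {α : F4} (hα : α ^ 2 + α + 1 = 0) (z : F4) :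
    ∃ z1 z2 : F4, IsBin z1 ∧ IsBin z2 ∧ z = α * z1 + z2 := by
  have h2 : (1 : F4) + 1 = 0 := by
    have := CharTwo.add_self_eq_zero (R := F4) 1
    simpa using this
  have hα0 : α ≠ 0 := by
    rintro rfl
    simp at hα
  have hα1 : α ≠ 1 := by
    rintro rfl
    rw [one_pow, h2, zero_add] at hα
    exact one_ne_zero hα
  have hαnb : ¬ IsBin α := by rintro (h | h) <;> [exact hα0 h; exact hα1 h]
  set f : ZMod 2 × ZMod 2 → F4 := fun st => α * phi st.1 + phi st.2 with hf
  have hinj : Function.Injective f := by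
    rintro ⟨s, t⟩ ⟨s', t'⟩ h
    simp only [hf] at h
    by_cases hss : s = s'
    · subst hss
      have ht : phi t = phi t' := by exact add_left_cancel h
      exact Prod.ext rfl (phi.injective ht)
    · exfalso
      have hs1 : s - s' = 1 := by
        rcases zmod2_cases s with rfl | rfl <;> rcases zmod2_cases s' with rfl | rfl <;>
          first | (exact absurd rfl hss) | decide
      have hkey : α * (phi s - phi s') = phi t' - phi t := by linear_combination h
      rw [← map_sub, ← map_sub, hs1, map_one, mul_one] at hkey
      exact hαnb (isBin_iff.mpr ⟨t' - t, hkey.symm⟩)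
  have hsurj : Function.Surjective f := by
    have hcard : Nat.card F4 ≤ Nat.card (ZMod 2 × ZMod 2) := by
      rw [GaloisField.card 2 2 (by norm_num)]
      simp [Nat.card_eq_fintype_card]
    exact (hinj.bijective_of_nat_card_le hcard).2
  obtain ⟨⟨s, t⟩, hst⟩ := hsurj z
  exact ⟨phi s, phi t, isBin_iff.mpr ⟨s, rfl⟩, isBin_iff.mpr ⟨t, rfl⟩, hst.symm⟩

lemma polyOfVec_sub {n : ℕ} (c d : Fin n → F4) :
    polyOfVec (c - d) = polyOfVec c - polyOfVec d := by
  rw [sub_eq_add_neg, polyOfVec_add, polyOfVec_neg, sub_eq_add_neg]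

lemma shift_eq {n : ℕ} (hn : 0 < n) (a c : Fin n → F4) :
    polyOfVec (rightShift a c) =
      X * polyOfVec c - C (c ⟨n - 1, Nat.sub_lt hn Nat.one_pos⟩) * (X ^ n - polyOfVec a) := by
  ext j
  rw [coeff_sub, coeff_C_mul, coeff_sub, coeff_X_pow, polyOfVec_coeff, polyOfVec_coeff]
  cases j with
  | zero =>
    rw [mul_coeff_zero, coeff_X_zero, zero_mul]
    simp only [rightShift]
    split_ifs <;> first | ring1 | (exact (‹False›).elim) | (exfalso; omega)
  | succ k =>
    rw [coeff_X_mul, polyOfVec_coeff]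
    simp only [rightShift, Nat.add_sub_cancel]
    by_cases h2 : k + 1 = n
    · have hfin : ∀ (h : k < n), (⟨k, h⟩ : Fin n) = ⟨n - 1, Nat.sub_lt hn Nat.one_pos⟩ := by
        intro h; apply Fin.ext; simp; omega
      split_ifs <;> (try rw [hfin]) <;> first | ring1 | (exact (‹False›).elim) | (exfalso; omega)
    · split_ifs <;> first | ring1 | (exact (‹False›).elim) | (exfalso; omega)

lemma quotMk_msub {n : ℕ} (a : Fin n → F4) : quotMk a (X ^ n - polyOfVec a) = 0 :=
  Ideal.Quotient.eq_zero_iff_mem.mpr (Ideal.mem_span_singleton_self _)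

section Code
variable {n : ℕ} {a : Fin n → F4} {C : AddSubgroup (Fin n → F4)}

lemma zero_mem_code : (0 : Polynomial F4 ⧸ Ideal.span {X ^ n - polyOfVec a}) ∈ codeImage a C :=
  ⟨0, C.zero_mem, by show quotMk a (polyOfVec 0) = 0; rw [polyOfVec_zero, map_zero]⟩

lemma add_mem_code {z w} (hz : z ∈ codeImage a C) (hw : w ∈ codeImage a C) :
    z + w ∈ codeImage a C := by
  obtain ⟨c, hc, rfl⟩ := hz
  obtain ⟨d, hd, rfl⟩ := hw
  exact ⟨c + d, C.add_mem hc hd, by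
    show quotMk a (polyOfVec (c + d)) = quotMk a (polyOfVec c) + quotMk a (polyOfVec d)
    rw [polyOfVec_add, map_add]⟩

lemma sub_mem_code {z w} (hz : z ∈ codeImage a C) (hw : w ∈ codeImage a C) :
    z - w ∈ codeImage a C := by
  obtain ⟨c, hc, rfl⟩ := hz
  obtain ⟨d, hd, rfl⟩ := hw
  exact ⟨c - d, C.sub_mem hc hd, by
    show quotMk a (polyOfVec (c - d)) = quotMk a (polyOfVec c) - quotMk a (polyOfVec d)
    rw [polyOfVec_sub, map_sub]⟩

variable (hn : 0 < n) (hC : IsRightPolycyclic a C)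
include hn hC

lemma X_mul_mem {z} (hz : z ∈ codeImage a C) : quotMk a X * z ∈ codeImage a C := by
  obtain ⟨c, hc, rfl⟩ := hz
  refine ⟨rightShift a c, hC c hc, ?_⟩
  show quotMk a (polyOfVec (rightShift a c)) = quotMk a X * quotMk a (polyOfVec c)
  rw [shift_eq hn a c, map_sub, map_mul, map_mul, quotMk_msub, mul_zero, sub_zero]

lemma Xpow_mul_mem (k : ℕ) {z} (hz : z ∈ codeImage a C) :
    quotMk a (X ^ k) * z ∈ codeImage a C := by
  induction k generalizing z with
  | zero => simpa using hz
  | succ k ih =>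
    have : quotMk a (X ^ (k+1)) * z = quotMk a (X ^ k) * (quotMk a X * z) := by
      rw [pow_succ, map_mul, mul_assoc]
    rw [this]
    exact ih (X_mul_mem hn hC hz)

lemma binmul_mem {q : Polynomial F4} (hq : IsBinPoly q) {z} (hz : z ∈ codeImage a C) :
    quotMk a q * z ∈ codeImage a C := by
  rw [show q = ∑ i ∈ q.support, monomial i (q.coeff i) from q.as_sum_support, map_sum,
    Finset.sum_mul]
  apply Finset.sum_induction _ (· ∈ codeImage a C)
    (fun x y hx hy => add_mem_code hx hy) zero_mem_code
  intro i _
  rcases hq i with h0 | h1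
  · rw [h0]
    simp only [monomial_zero_right, map_zero, zero_mul]
    exact zero_mem_code
  · rw [h1, ← X_pow_eq_monomial]
    exact Xpow_mul_mem hn hC i hz

end Code

lemma exists_minimalDeg (P : Polynomial F4 → Prop) (h : ∃ p, P p) :
    ∃ p, P p ∧ ∀ q, P q → p.natDegree ≤ q.natDegree := by
  classical
  obtain ⟨p0, hp0⟩ := h
  have hex : ∃ k, ∃ p, P p ∧ p.natDegree = k := ⟨p0.natDegree, p0, hp0, rfl⟩
  obtain ⟨p, hp, hpk⟩ := Nat.find_spec hex
  exact ⟨p, hp, fun q hq => le_trans (le_of_eq hpk) (Nat.find_min' hex ⟨q, hq, rfl⟩)⟩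

lemma degle {p q : Polynomial F4} (hp : p ≠ 0) (hq : q ≠ 0) (h : p.natDegree ≤ q.natDegree) :
    p.degree ≤ q.degree := by
  rw [degree_eq_natDegree hp, degree_eq_natDegree hq]
  exact_mod_cast h

lemma m_bin {n : ℕ} {a : Fin n → F4} (ha : IsBinVec a) : IsBinPoly (X ^ n - polyOfVec a) := by
  intro j
  rw [coeff_sub, coeff_X_pow, polyOfVec_coeff]
  by_cases hj : j = n
  · subst hj
    rw [if_pos rfl, dif_neg (lt_irrefl _), sub_zero]
    exact Or.inr rfl
  · rw [if_neg hj]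
    by_cases hj2 : j < n
    · rw [dif_pos hj2, zero_sub]
      rcases ha ⟨j, hj2⟩ with h | h
      · exact Or.inl (by rw [h, neg_zero])
      · exact Or.inr (by rw [h]; exact CharTwo.neg_eq 1)
    · rw [dif_neg hj2, zero_sub, neg_zero]
      exact Or.inl rfl

lemma m_monic {n : ℕ} (a : Fin n → F4) : (X ^ n - polyOfVec a).Monic :=
  monic_X_pow_sub (degree_polyOfVec_lt a)

lemma degree_m {n : ℕ} (a : Fin n → F4) : (X ^ n - polyOfVec a).degree = (n : WithBot ℕ) := by
  have h : (polyOfVec a).degree < (X ^ n : Polynomial F4).degree := by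
    rw [degree_X_pow]; exact degree_polyOfVec_lt a
  rw [degree_sub_eq_left_of_degree_lt h, degree_X_pow]

lemma reduce {n : ℕ} (a : Fin n → F4) (ha : IsBinVec a) {p : Polynomial F4} (hp : IsBinPoly p) :
    ∃ r, IsBinPoly r ∧ r.degree < (n : WithBot ℕ) ∧ quotMk a r = quotMk a p := by
  obtain ⟨q, r, hq, hr, hpr, hdeg⟩ := bin_div hp (m_bin ha) (m_monic a)
  refine ⟨r, hr, by rwa [degree_m] at hdeg, ?_⟩
  have h2 : quotMk a p = quotMk a q * quotMk a (X ^ n - polyOfVec a) + quotMk a r := by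
    rw [← map_mul, ← map_add, ← hpr]
  rw [h2, quotMk_msub, mul_zero, zero_add]

end Stmt5Aux

open Stmt5Aux

/-- every additive right polycyclic code `C` induced by a binary
vector `a` admits a standard generating triple `(g1, g2, b)` of binary
polynomials of degree less than `n`, and `C` equals the `F2[x]`-submodule of
`R_n` generated by `α g1 + g2` and `b`. -/
theorem stmt_5 (n : ℕ) (hn : 0 < n) (a : Fin n → F4) (ha : IsBinVec a)
    (C : AddSubgroup (Fin n → F4)) (hC : IsRightPolycyclic a C)
    (α : F4) (hα : α ^ 2 + α + 1 = 0) :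
    ∃ g1 g2 b : Polynomial F4, StdTriple a C α g1 g2 b ∧ GeneratesCode a C α g1 g2 b := by
  classical
  have hdec := f4_decomp hα
  have hvdec : ∀ c : Fin n → F4, ∃ c1 c2 : Fin n → F4, IsBinVec c1 ∧ IsBinVec c2 ∧
      polyOfVec c = Polynomial.C α * polyOfVec c1 + polyOfVec c2 := by
    intro c
    choose c1 c2 h1 h2 h3 using fun i => hdec (c i)
    refine ⟨c1, c2, h1, h2, ?_⟩
    have hce : c = (fun i => α * c1 i) + c2 := funext h3
    rw [hce, polyOfVec_add, polyOfVec_smul]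
  -- choose b
  obtain ⟨b, hbbin, hbdeg, hbmem, hbalt⟩ :
      ∃ b : Polynomial F4, IsBinPoly b ∧ b.degree < (n : WithBot ℕ) ∧
        quotMk a b ∈ codeImage a C ∧
        ((b = 0 ∧ ∀ p : Polynomial F4, IsBinPoly p → p.degree < (n : WithBot ℕ) →
            quotMk a p ∈ codeImage a C → p = 0) ∨
         (b ≠ 0 ∧ ∀ p : Polynomial F4, IsBinPoly p → p ≠ 0 → p.degree < (n : WithBot ℕ) →
            quotMk a p ∈ codeImage a C → b.degree ≤ p.degree)) := by
    by_cases hB : ∃ p : Polynomial F4, IsBinPoly p ∧ p ≠ 0 ∧ p.degree < (n : WithBot ℕ) ∧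
        quotMk a p ∈ codeImage a C
    · obtain ⟨b, ⟨hbbin, hbne, hbdeg, hbmem⟩, hbmin⟩ := exists_minimalDeg _ hB
      refine ⟨b, hbbin, hbdeg, hbmem, Or.inr ⟨hbne, ?_⟩⟩
      intro p hp1 hp2 hp3 hp4
      exact degle hbne hp2 (hbmin p ⟨hp1, hp2, hp3, hp4⟩)
    · refine ⟨0, binPoly_zero, ?_, by rw [map_zero]; exact zero_mem_code, Or.inl ⟨rfl, ?_⟩⟩
      · rw [degree_zero]; exact WithBot.bot_lt_coe n
      · intro p h1 h2 h3
        by_contra hp0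
        exact hB ⟨p, h1, hp0, h2, h3⟩
  -- representation of binary code elements by b
  have hrep : ∀ s : Polynomial F4, IsBinPoly s → s.degree < (n : WithBot ℕ) →
      quotMk a s ∈ codeImage a C → ∃ q, IsBinPoly q ∧ quotMk a s = quotMk a (q * b) := by
    intro s hs hsdeg hsmem
    rcases hbalt with ⟨hb0, hall⟩ | ⟨hb0, hmin⟩
    · refine ⟨0, binPoly_zero, ?_⟩
      rw [hall s hs hsdeg hsmem, zero_mul]
    · have hbmonic := monic_of_bin hbbin hb0
      obtain ⟨q, r, hq, hr, hsr, hdeg⟩ := bin_div hs hbbin hbmonic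
      have hrmem : quotMk a r ∈ codeImage a C := by
        have he : quotMk a r = quotMk a s - quotMk a q * quotMk a b := by
          rw [hsr]; simp only [map_add, map_mul]; ring
        rw [he]
        exact sub_mem_code hsmem (binmul_mem hn hC hq hbmem)
      have hr0 : r = 0 := by
        by_contra hr0
        exact absurd (lt_of_le_of_lt (hmin r hr hr0 (lt_trans hdeg hbdeg) hrmem) hdeg)
          (lt_irrefl _)
      exact ⟨q, hq, by rw [hsr, hr0, add_zero]⟩
  -- choose g1, g2
  obtain ⟨g1, g2, hg1bin, hg2bin, hg1deg, hg2deg, hgmem, hg2lt, hgalt⟩ :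
      ∃ g1 g2 : Polynomial F4, IsBinPoly g1 ∧ IsBinPoly g2 ∧
        g1.degree < (n : WithBot ℕ) ∧ g2.degree < (n : WithBot ℕ) ∧
        quotMk a (Polynomial.C α * g1 + g2) ∈ codeImage a C ∧
        (b ≠ 0 → g2 ≠ 0 → g2.degree < b.degree) ∧
        ((g1 = 0 ∧ g2 = 0 ∧ ∀ h1 h2 : Polynomial F4, IsBinPoly h1 → IsBinPoly h2 →
            h1.degree < (n : WithBot ℕ) → h2.degree < (n : WithBot ℕ) →
            quotMk a (Polynomial.C α * h1 + h2) ∈ codeImage a C → h1 = 0) ∨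
         (g1 ≠ 0 ∧ ∀ h1 h2 : Polynomial F4, IsBinPoly h1 → IsBinPoly h2 → h1 ≠ 0 →
            h1.degree < (n : WithBot ℕ) → h2.degree < (n : WithBot ℕ) →
            quotMk a (Polynomial.C α * h1 + h2) ∈ codeImage a C → g1.degree ≤ h1.degree)) := by
    by_cases hG : ∃ h1 : Polynomial F4, IsBinPoly h1 ∧ h1 ≠ 0 ∧ h1.degree < (n : WithBot ℕ) ∧
        ∃ h2 : Polynomial F4, IsBinPoly h2 ∧ h2.degree < (n : WithBot ℕ) ∧
          quotMk a (Polynomial.C α * h1 + h2) ∈ codeImage a C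
    · obtain ⟨g1, ⟨hg1bin, hg1ne, hg1deg, g2₀, hg2bin, hg2deg, hgmem⟩, hgmin'⟩ :=
        exists_minimalDeg _ hG
      have hgmin : ∀ h1 h2 : Polynomial F4, IsBinPoly h1 → IsBinPoly h2 → h1 ≠ 0 →
          h1.degree < (n : WithBot ℕ) → h2.degree < (n : WithBot ℕ) →
          quotMk a (Polynomial.C α * h1 + h2) ∈ codeImage a C → g1.degree ≤ h1.degree := by
        intro h1 h2 hb1 hb2 hne hd1 hd2 hm
        exact degle hg1ne hne (hgmin' h1 ⟨hb1, hne, hd1, h2, hb2, hd2, hm⟩)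
      by_cases hb0 : b = 0
      · exact ⟨g1, g2₀, hg1bin, hg2bin, hg1deg, hg2deg, hgmem,
          fun h _ => absurd hb0 h, Or.inr ⟨hg1ne, hgmin⟩⟩
      · have hbmonic := monic_of_bin hbbin hb0
        obtain ⟨q, r, hq, hr, hqr, hdeg⟩ := bin_div hg2bin hbbin hbmonic
        refine ⟨g1, r, hg1bin, hr, hg1deg, lt_trans hdeg hbdeg, ?_,
          fun _ _ => hdeg, Or.inr ⟨hg1ne, hgmin⟩⟩
        have he : quotMk a (Polynomial.C α * g1 + r) =
            quotMk a (Polynomial.C α * g1 + g2₀) - quotMk a q * quotMk a b := by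
          rw [hqr]; simp only [map_add, map_mul]; ring
        rw [he]
        exact sub_mem_code hgmem (binmul_mem hn hC hq hbmem)
    · refine ⟨0, 0, binPoly_zero, binPoly_zero, ?_, ?_, ?_, fun _ h => absurd rfl h,
        Or.inl ⟨rfl, rfl, ?_⟩⟩
      · rw [degree_zero]; exact WithBot.bot_lt_coe n
      · rw [degree_zero]; exact WithBot.bot_lt_coe n
      · rw [mul_zero, add_zero, map_zero]; exact zero_mem_code
      · intro h1 h2 hb1 hb2 hd1 hd2 hm
        by_contra hne
        exact hG ⟨h1, hb1, hne, hd1, h2, hb2, hd2, hm⟩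
  refine ⟨g1, g2, b, ⟨hg1bin, hg2bin, hbbin, hg1deg, hg2deg, hbdeg, ?_, ?_, hg2lt⟩, ?_, ?_⟩
  · rcases hbalt with ⟨hb0, hall⟩ | ⟨hb0, hmin⟩
    · exact Or.inl ⟨hb0, hall⟩
    · exact Or.inr ⟨hb0, hbmem, hmin⟩
  · rcases hgalt with ⟨hg10, hg20, hall⟩ | ⟨hg1ne, hgmin⟩
    · exact Or.inl ⟨hg10, hg20, hall⟩
    · exact Or.inr ⟨hg1ne, hgmem, hgmin⟩
  · -- every codeword is a combination
    intro c hc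
    obtain ⟨c1, c2, hc1, hc2, hcd⟩ := hvdec c
    have hcmem : quotMk a (polyOfVec c) ∈ codeImage a C := ⟨c, hc, rfl⟩
    rcases hgalt with ⟨hg10, hg20, hall⟩ | ⟨hg1ne, hgmin⟩
    · have hp10 : polyOfVec c1 = 0 := by
        refine hall _ _ (isBinPoly_polyOfVec hc1) (isBinPoly_polyOfVec hc2)
          (degree_polyOfVec_lt c1) (degree_polyOfVec_lt c2) ?_
        rw [← hcd]; exact hcmem
      have hce : polyOfVec c = polyOfVec c2 := by rw [hcd, hp10]; ring
      have hmem2 : quotMk a (polyOfVec c2) ∈ codeImage a C := by rw [← hce]; exact hcmem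
      obtain ⟨q2, hq2, hq2e⟩ := hrep _ (isBinPoly_polyOfVec hc2) (degree_polyOfVec_lt c2) hmem2
      refine ⟨0, q2, binPoly_zero, hq2, ?_⟩
      rw [hce, hq2e]
      congr 1
      ring
    · have hg1monic := monic_of_bin hg1bin hg1ne
      obtain ⟨q1, r1, hq1, hr1, hdiv, hdeg1⟩ := bin_div (isBinPoly_polyOfVec hc1) hg1bin hg1monic
      set s : Polynomial F4 := polyOfVec c2 - q1 * g2 with hs
      have hsbin : IsBinPoly s := binPoly_sub (isBinPoly_polyOfVec hc2) (binPoly_mul hq1 hg2bin)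
      obtain ⟨s', hs'bin, hs'deg, hs'eq⟩ := reduce a ha hsbin
      have hkey : polyOfVec c = q1 * (Polynomial.C α * g1 + g2) + (Polynomial.C α * r1 + s) := by
        rw [hcd, hdiv, hs]; ring
      have hmem3 : quotMk a (Polynomial.C α * r1 + s') ∈ codeImage a C := by
        have h1 : quotMk a (Polynomial.C α * r1 + s') = quotMk a (Polynomial.C α * r1 + s) := by
          rw [map_add, map_add, hs'eq]
        have h2 : quotMk a (Polynomial.C α * r1 + s) =
            quotMk a (polyOfVec c) - quotMk a q1 * quotMk a (Polynomial.C α * g1 + g2) := by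
          rw [hkey]; simp only [map_add, map_mul]; ring
        rw [h1, h2]
        exact sub_mem_code hcmem (binmul_mem hn hC hq1 hgmem)
      have hr10 : r1 = 0 := by
        by_contra hne
        exact absurd (lt_of_le_of_lt
          (hgmin r1 s' hr1 hs'bin hne (lt_trans hdeg1 hg1deg) hs'deg hmem3) hdeg1)
          (lt_irrefl _)
      have hs'mem : quotMk a s' ∈ codeImage a C := by
        have he : quotMk a s' = quotMk a (Polynomial.C α * r1 + s') := by
          rw [hr10, mul_zero, zero_add]
        rw [he]; exact hmem3
      obtain ⟨q2, hq2, hq2e⟩ := hrep s' hs'bin hs'deg hs'mem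
      refine ⟨q1, q2, hq1, hq2, ?_⟩
      calc quotMk a (polyOfVec c)
          = quotMk a (q1 * (Polynomial.C α * g1 + g2)) + quotMk a (Polynomial.C α * r1 + s) := by
            rw [hkey, map_add]
        _ = quotMk a (q1 * (Polynomial.C α * g1 + g2)) + quotMk a s' := by
            rw [hr10, mul_zero, zero_add, hs'eq]
        _ = quotMk a (q1 * (Polynomial.C α * g1 + g2)) + quotMk a (q2 * b) := by rw [hq2e]
        _ = quotMk a (q1 * (Polynomial.C α * g1 + g2) + q2 * b) := by rw [map_add]
  · -- every combination is a codeword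
    intro q1 q2 hq1 hq2
    have he : quotMk a (q1 * (Polynomial.C α * g1 + g2) + q2 * b) =
        quotMk a q1 * quotMk a (Polynomial.C α * g1 + g2) + quotMk a q2 * quotMk a b := by
      rw [map_add, map_mul, map_mul]
    rw [he]
    exact add_mem_code (binmul_mem hn hC hq1 hgmem) (binmul_mem hn hC hq2 hbmem)
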